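/- Let G be an (n,m)-superconcentrator of depth d with generator-matrix polynomial M, where M_{i,j} = Σ over paths p from input i to output j of Π_{e ∈ p} r_e, with indeterminates r_e for each edge e. Then for any equal-size subsets X ⊆ [n], Y ⊆ [m], the polynomial det(M_{X,Y}) is a nonzero polynomial of degree at most d·|X|, and hence for uniformly random coefficients over a finite field F, Pr[det(M_{X,Y}) = 0] ≤ d·|X|/|F|. -/

import Mathlib

open scoped Classical

/-- `p` is a (nonempty) directed path from `a` to `b` in the digraph with edge relation `E`. -/
def IsPathFromTo {V : Type*} (E : V → V → Prop) (p : List V) (a b : V) : Prop :=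
  p.Chain' E ∧ p.head? = some a ∧ p.getLast? = some b

/-- A family of pairwise vertex-disjoint directed paths, one starting at each vertex of `S`,
each ending at a vertex of `T`. -/
def HasDisjointPathFamily {V : Type*} (E : V → V → Prop) (S T : Finset V) : Prop :=
  ∃ P : V → List V,
    (∀ s ∈ S, ∃ t ∈ T, IsPathFromTo E (P s) s t) ∧
    (∀ s ∈ S, ∀ s' ∈ S, s ≠ s' → ∀ v, v ∈ P s → v ∉ P s')

/-- `(n, m)`-superconcentrator. -/
def IsSuperconcentrator {V : Type*} {n m : ℕ} (E : V → V → Prop)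
    (inp : Fin n ↪ V) (out : Fin m ↪ V) : Prop :=
  ∀ (X : Finset (Fin n)) (Y : Finset (Fin m)), X.card = Y.card →
    HasDisjointPathFamily E (X.map inp) (Y.map out)

/-- The generator matrix with polynomial entries: one indeterminate `X e` per edge `e`, and
`M i j = Σ_{paths p : inp i → out j} Π_{e ∈ p} X e`. -/
noncomputable def genPolyMatrix {V F : Type*} [Field F] {n m : ℕ} (E : V → V → Prop)
    (inp : Fin n ↪ V) (out : Fin m ↪ V) :
    Matrix (Fin n) (Fin m) (MvPolynomial (V × V) F) :=
  fun i j => ∑ᶠ p ∈ {p : List V | IsPathFromTo E p (inp i) (out j)},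
    ((p.zip p.tail).map MvPolynomial.X).prod

section Lists
open List

variable {V : Type*}

lemma zip_tail_prefix : ∀ {p L : List V}, p <+: L → (p.zip p.tail) <+: (L.zip L.tail)
  | [], L, _ => by simp
  | a :: p', L, h => by
    obtain ⟨t, rfl⟩ := h
    match p' with
    | [] => simp
    | b :: p'' =>
      have ih := zip_tail_prefix (p := b :: p'') (L := b :: p'' ++ t) ⟨t, rfl⟩
      obtain ⟨s, hs⟩ := ih
      exact ⟨s, by simpa using congrArg (List.cons (a, b)) hs⟩

lemma succ_unique : ∀ {L : List V} {u w : V} {M : List V}, L.Nodup →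
    (u, w) ∈ L.zip L.tail → (u :: M) <:+ L → M.head? = some w
  | [], _, _, _, _, h, _ => by simp at h
  | [a], _, _, _, _, h, _ => by simp at h
  | a :: b :: L₃, u, w, M, hnd, hz, hsuf => by
    simp only [List.tail_cons, List.zip_cons_cons, List.mem_cons] at hz
    rcases hz with h1 | h2
    · obtain ⟨rfl, rfl⟩ := Prod.ext_iff.1 h1
      rcases List.suffix_cons_iff.1 hsuf with h | h
      · obtain ⟨-, h2⟩ := List.cons.inj h
        subst h2; simp
      · exfalso
        have : u ∈ w :: L₃ := h.subset List.mem_cons_self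
        simp only [List.nodup_cons] at hnd
        exact hnd.1 this
    · have hu : u ∈ b :: L₃ := (List.of_mem_zip h2).1
      rcases List.suffix_cons_iff.1 hsuf with h | h
      · exfalso
        obtain ⟨h1, -⟩ := List.cons.inj h
        subst h1
        simp only [List.nodup_cons] at hnd
        exact hnd.1 hu
      · exact succ_unique (List.nodup_cons.1 hnd).2 h2 h

lemma chain_forced {L : List V} (hnd : L.Nodup) :
    ∀ (p : List V) (u : V) (M : List V), (u :: M) <:+ L → p.head? = some u →
      (∀ e ∈ p.zip p.tail, e ∈ L.zip L.tail) → p <+: (u :: M)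
  | [], _, _, _, h, _ => by simp at h
  | [x], u, M, _, hh, _ => by
    obtain rfl : x = u := by simpa using hh
    exact ⟨M, rfl⟩
  | x :: w :: q, u, M, hsuf, hh, he => by
    obtain rfl : u = x := by simpa using hh.symm
    have hz : (u, w) ∈ L.zip L.tail := he _ (by simp)
    have hM : M.head? = some w := succ_unique hnd hz hsuf
    obtain ⟨M', rfl⟩ : ∃ M', M = w :: M' := by
      cases M with
      | nil => simp at hM
      | cons a M' => exact ⟨M', by simpa using hM⟩
    have hsuf' : (w :: M') <:+ L := (List.suffix_cons u (w :: M')).trans hsuf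
    have ih := chain_forced hnd (w :: q) w M' hsuf' rfl
      (fun e hee => he e (by simpa using Or.inr hee))
    obtain ⟨s, hs⟩ := ih
    exact ⟨s, by simpa using congrArg (List.cons u) hs⟩

lemma prefix_eq_of_getLast {L p p' : List V} (hnd : L.Nodup) (hp : p <+: L) (hp' : p' <+: L)
    (h0 : p ≠ []) (h0' : p' ≠ []) (hl : p.getLast? = p'.getLast?) : p = p' := by
  have key : ∀ {q q' : List V}, q' <+: L → q <+: q' → q ≠ [] → q' ≠ [] →
      q.getLast? = q'.getLast? → q = q' := by
    intro q q' hq'L hqq' hq0 hq'0 hql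
    obtain ⟨t, rfl⟩ := hqq'
    cases t with
    | nil => simp
    | cons a t' =>
      exfalso
      have hndq : (q ++ a :: t').Nodup := hq'L.sublist.nodup hnd
      have hdisj := List.disjoint_of_nodup_append hndq
      obtain ⟨y, hy⟩ := List.getLast?_isSome.2 hq0 |> Option.isSome_iff_exists.1
      have hyq : y ∈ q := by
        obtain ⟨h, rfl⟩ := List.mem_getLast?_eq_getLast hy
        exact List.getLast_mem h
      have hy' : (q ++ a :: t').getLast? = some y := hql ▸ hy
      rw [List.getLast?_append_of_ne_nil _ (by simp)] at hy'
      have hyt : y ∈ a :: t' := by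
        obtain ⟨h, rfl⟩ := List.mem_getLast?_eq_getLast hy'
        exact List.getLast_mem h
      exact hdisj hyq hyt
  rcases List.prefix_or_prefix_of_prefix hp hp' with h | h
  · exact key hp' h h0 h0' hl
  · exact (key hp h h0' h0 hl.symm).symm

lemma exists_prefix_getLast : ∀ {L : List V} {y : V}, y ∈ L →
    ∃ p, p <+: L ∧ p.head? = L.head? ∧ p.getLast? = some y
  | [], y, h => by simp at h
  | a :: L', y, h => by
    rcases List.mem_cons.1 h with rfl | h'
    · exact ⟨[y], ⟨L', rfl⟩, rfl, rfl⟩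
    · obtain ⟨p', hpre, hh, hl⟩ := exists_prefix_getLast h'
      cases L' with
      | nil => simp at h'
      | cons b M =>
        obtain ⟨q, rfl⟩ : ∃ q, p' = b :: q := by
          cases p' with
          | nil => simp at hl
          | cons c q =>
            obtain rfl : c = b := by simpa using hh
            exact ⟨q, rfl⟩
        obtain ⟨s, hs⟩ := hpre
        exact ⟨a :: b :: q, ⟨s, by simpa using congrArg (List.cons a) hs⟩, rfl,
          by simpa using hl⟩

lemma chain_edges_sub {L : List V} {Ed : V × V → Prop}
    (hstep : ∀ u w, u ∈ L → Ed (u, w) → (u, w) ∈ L.zip L.tail) :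
    ∀ (p : List V) (u : V), p.head? = some u → u ∈ L → (∀ e ∈ p.zip p.tail, Ed e) →
      ∀ e ∈ p.zip p.tail, e ∈ L.zip L.tail
  | [], _, hh, _, _ => by simp at hh
  | [x], _, _, _, _ => by simp
  | x :: w :: q, u, hh, hu, hEd => by
    obtain rfl : u = x := by simpa using hh.symm
    have h1 : (u, w) ∈ L.zip L.tail := hstep u w hu (hEd _ (by simp))
    have hw : w ∈ L := List.Sublist.mem (List.of_mem_zip h1).2 (List.tail_sublist L)
    have ih := chain_edges_sub hstep (w :: q) w rfl hw
      (fun e hee => hEd e (by simpa using Or.inr hee))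
    intro e hee
    simp only [List.tail_cons, List.zip_cons_cons, List.mem_cons] at hee
    rcases hee with rfl | hee
    · exact h1
    · exact ih e hee

lemma exists_nodup_chain (E : V → V → Prop) : ∀ (N : ℕ) (p : List V), p.length ≤ N →
    p.Chain' E → ∀ a b, p.head? = some a → p.getLast? = some b →
    ∃ q : List V, q.Chain' E ∧ q.head? = some a ∧ q.getLast? = some b ∧ q.Nodup ∧ ∀ v ∈ q, v ∈ p := by
  intro N
  induction N with
  | zero =>
    intro p hlen _ a b hh _
    cases p with
    | nil => simp at hh
    | cons c t => simp at hlen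
  | succ N ih =>
    intro p hlen hch a b hh hl
    classical
    by_cases hnd : p.Nodup
    · exact ⟨p, hch, hh, hl, hnd, fun v hv => hv⟩
    · obtain ⟨x, hx⟩ := List.exists_duplicate_iff_not_nodup.2 hnd
      -- decompose p = l₁ ++ x :: l₂ ++ x :: l₃
      obtain ⟨l₁, l₂, l₃, rfl⟩ : ∃ l₁ l₂ l₃, p = l₁ ++ x :: l₂ ++ x :: l₃ := by
        have hcount : 2 ≤ p.count x := List.duplicate_iff_two_le_count.1 hx
        obtain ⟨s, t, rfl⟩ := List.append_of_mem hx.mem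
        rw [List.count_append, List.count_cons_self] at hcount
        by_cases hxt : x ∈ t
        · obtain ⟨u, v, rfl⟩ := List.append_of_mem hxt
          exact ⟨s, u, v, by simp⟩
        · have hxs : x ∈ s := by
            by_contra hxs
            simp [List.count_eq_zero_of_not_mem hxs, List.count_eq_zero_of_not_mem hxt] at hcount
          obtain ⟨u, v, rfl⟩ := List.append_of_mem hxs
          exact ⟨u, v, t, by simp⟩
      set p' := l₁ ++ x :: l₃ with hp'
      have hlen' : p'.length ≤ N := by
        have h1 : (l₁ ++ x :: l₂ ++ x :: l₃).length ≤ N + 1 := hlen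
        simp only [hp', List.length_append, List.length_cons] at h1 ⊢
        omega
      have hch' : p'.Chain' E := by
        rw [hp']; show List.IsChain E _; rw [List.isChain_append]
        have h1 : (l₁ ++ (x :: (l₂ ++ x :: l₃))).Chain' E := by simpa using hch
        change List.IsChain E _ at h1; rw [List.isChain_append] at h1
        refine ⟨h1.1, ?_, ?_⟩
        · exact h1.2.1.suffix ⟨x :: l₂, by simp⟩
        · simpa using h1.2.2
      have hh' : p'.head? = some a := by
        rw [hp']
        cases l₁ with
        | nil => simpa using hh
        | cons c m => simpa using hh
      have hl' : p'.getLast? = some b := by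
        have h1 : (l₁ ++ x :: l₂ ++ x :: l₃).getLast? = (x :: l₃).getLast? :=
          List.getLast?_append_of_ne_nil _ (by simp)
        have h2 : (l₁ ++ x :: l₃).getLast? = (x :: l₃).getLast? :=
          List.getLast?_append_of_ne_nil _ (by simp)
        rw [hp', h2, ← h1, hl]
      obtain ⟨q, hq1, hq2, hq3, hq4, hq5⟩ := ih p' hlen' hch' a b hh' hl'
      exact ⟨q, hq1, hq2, hq3, hq4, fun v hv => by
        have := hq5 v hv
        simp only [hp', List.mem_append, List.mem_cons] at this
        simp only [List.mem_append, List.mem_cons]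
        tauto⟩

end Lists

section SZ
open scoped Classical
open MvPolynomial Finset

lemma sz_fin (F : Type*) [Field F] [Fintype F] :
    ∀ (n : ℕ) (p : MvPolynomial (Fin n) F), p ≠ 0 →
    (Finset.univ.filter fun r : Fin n → F => eval r p = 0).card * Fintype.card F ≤
      p.totalDegree * Fintype.card F ^ n := by
  intro n
  induction n with
  | zero =>
    intro p hp
    obtain ⟨c, rfl⟩ := MvPolynomial.C_surjective (Fin 0) p
    have hc : c ≠ 0 := fun h => hp (by simp [h])
    have : (Finset.univ.filter fun r : Fin 0 → F => eval r (C c) = 0) = ∅ := by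
      ext r; simp [hc]
    simp [this, hc]
  | succ n ih =>
    intro p hp
    set q := finSuccEquiv F n p with hq
    have hq0 : q ≠ 0 := fun h => hp (by
      have := congrArg (finSuccEquiv F n).symm h
      simpa [hq] using this)
    set t := q.natDegree with ht
    set c := q.coeff t with hc
    have hc0 : c ≠ 0 := by
      simpa [hc, ht] using Polynomial.leadingCoeff_ne_zero.mpr hq0
    have hdeg : c.totalDegree + t ≤ p.totalDegree :=
      totalDegree_coeff_finSuccEquiv_add_le p t hc0
    -- split the count
    have key : (Finset.univ.filter fun r : Fin (n+1) → F => eval r p = 0).card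
        = ∑ s : Fin n → F, (Finset.univ.filter fun y : F => eval (Fin.cons y s) p = 0).card := by
      rw [Finset.card_filter]
      have e1 : (∑ r : Fin (n+1) → F, if eval r p = 0 then 1 else 0)
          = ∑ z : F × (Fin n → F), (if eval (Fin.cons z.1 z.2) p = 0 then 1 else 0) :=
        (Fintype.sum_equiv (Fin.consEquiv fun _ => F)
          (fun z => if eval (Fin.cons z.1 z.2) p = 0 then 1 else 0)
          (fun r => if eval r p = 0 then 1 else 0)
          (fun z => by simp [Fin.consEquiv]; congr!)).symm
      rw [e1, Fintype.sum_prod_type, Finset.sum_comm]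
      exact Finset.sum_congr rfl fun s _ => (Finset.card_filter _ _).symm
    set Z := Finset.univ.filter fun s : Fin n → F => eval s c = 0 with hZ
    have hinner : ∀ s : Fin n → F, s ∉ Z →
        (Finset.univ.filter fun y : F => eval (Fin.cons y s) p = 0).card ≤ t := by
      intro s hs
      have hcs : eval s c ≠ 0 := by simpa [hZ] using hs
      set Q := q.map (eval s) with hQ
      have hQc : Q.coeff t ≠ 0 := by simpa [hQ, Polynomial.coeff_map] using hcs
      have hQ0 : Q ≠ 0 := fun h => hQc (by simp [h])
      have hsub : (Finset.univ.filter fun y : F => eval (Fin.cons y s) p = 0)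
          ⊆ Q.roots.toFinset := by
        intro y hy
        simp only [Finset.mem_filter, Finset.mem_univ, true_and] at hy
        rw [eval_eq_eval_mv_eval'] at hy
        simp only [Multiset.mem_toFinset, Polynomial.mem_roots hQ0]
        exact hy
      calc (Finset.univ.filter fun y : F => eval (Fin.cons y s) p = 0).card
          ≤ Q.roots.toFinset.card := Finset.card_le_card hsub
        _ ≤ Multiset.card Q.roots := Multiset.toFinset_card_le _
        _ ≤ Q.natDegree := Polynomial.card_roots' Q
        _ ≤ t := Polynomial.natDegree_map_le
    have hZcard : Z.card * Fintype.card F ≤ c.totalDegree * Fintype.card F ^ n := ih c hc0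
    have hsum : ∑ s : Fin n → F, (Finset.univ.filter fun y : F => eval (Fin.cons y s) p = 0).card
        ≤ Z.card * Fintype.card F + Fintype.card F ^ n * t := by
      calc ∑ s : Fin n → F, (Finset.univ.filter fun y : F => eval (Fin.cons y s) p = 0).card
          = ∑ s ∈ Z, (Finset.univ.filter fun y : F => eval (Fin.cons y s) p = 0).card
            + ∑ s ∈ Zᶜ, (Finset.univ.filter fun y : F => eval (Fin.cons y s) p = 0).card :=
            (Finset.sum_add_sum_compl Z _).symm
        _ ≤ ∑ s ∈ Z, Fintype.card F + ∑ s ∈ Zᶜ, t := by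
            gcongr with s hs s hs
            · exact le_trans (Finset.card_filter_le _ _) (by simp)
            · exact hinner s (by simpa using hs)
        _ ≤ Z.card * Fintype.card F + Fintype.card F ^ n * t := by
            simp only [Finset.sum_const, smul_eq_mul]
            gcongr
            calc Zᶜ.card ≤ (Finset.univ : Finset (Fin n → F)).card := Finset.card_le_card (Finset.subset_univ _)
              _ = Fintype.card F ^ n := by simp [Fintype.card_fun]
    calc (Finset.univ.filter fun r : Fin (n+1) → F => eval r p = 0).card * Fintype.card F
        ≤ (Z.card * Fintype.card F + Fintype.card F ^ n * t) * Fintype.card F := by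
          rw [key]; exact Nat.mul_le_mul_right _ hsum
      _ = Z.card * Fintype.card F * Fintype.card F + t * Fintype.card F ^ (n+1) := by ring
      _ ≤ c.totalDegree * Fintype.card F ^ n * Fintype.card F + t * Fintype.card F ^ (n+1) := by
          gcongr
      _ = (c.totalDegree + t) * Fintype.card F ^ (n+1) := by ring
      _ ≤ p.totalDegree * Fintype.card F ^ (n+1) := Nat.mul_le_mul_right _ hdeg

lemma sz_general {σ F : Type*} [Fintype σ] [Field F] [Fintype F]
    (p : MvPolynomial σ F) (hp : p ≠ 0) :
    (Finset.univ.filter fun r : σ → F => eval r p = 0).card * Fintype.card F ≤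
      p.totalDegree * Fintype.card F ^ Fintype.card σ := by
  obtain ⟨e⟩ : Nonempty (σ ≃ Fin (Fintype.card σ)) := ⟨Fintype.equivFin σ⟩
  set p' := rename e p with hp'
  have hp'0 : p' ≠ 0 := fun h =>
    hp (rename_injective _ e.injective (by simpa [hp'] using h))
  have hdeg : p'.totalDegree = p.totalDegree := by
    refine le_antisymm (totalDegree_rename_le _ _) ?_
    have : p = rename e.symm p' := by
      rw [hp', rename_rename]
      have : (⇑e.symm ∘ ⇑e) = id := by funext x; simp
      rw [this, rename_id, AlgHom.id_apply]
    conv_lhs => rw [this]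
    exact totalDegree_rename_le _ _
  have hcard : (Finset.univ.filter fun r : σ → F => eval r p = 0).card
      = (Finset.univ.filter fun r : Fin (Fintype.card σ) → F => eval r p' = 0).card := by
    apply Finset.card_bij (fun r _ => r ∘ e.symm)
    · intro r hr
      simp only [Finset.mem_filter, Finset.mem_univ, true_and] at hr ⊢
      rw [hp', eval_rename]
      have h2 : (r ∘ ⇑e.symm) ∘ ⇑e = r := by funext x; simp
      rw [h2]; exact hr
    · intro r hr r' hr' h
      funext x
      have := congrFun h (e x)
      simpa using this
    · intro r hr
      refine ⟨r ∘ e, Finset.mem_filter.2 ⟨Finset.mem_univ _, ?_⟩, by funext x; simp⟩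
      simp only [Finset.mem_filter, Finset.mem_univ, true_and] at hr
      rwa [hp', eval_rename] at hr
  rw [hcard, ← hdeg]
  exact sz_fin F _ p' hp'0

end SZ

theorem stmt_14 {V F : Type*} [Field F] [Fintype F] [Fintype V] {n m d : ℕ}
    (E : V → V → Prop) (inp : Fin n ↪ V) (out : Fin m ↪ V)
    (hsc : IsSuperconcentrator E inp out)
    (hdepth : ∀ (p : List V) (a b : V), IsPathFromTo E p a b → p.length ≤ d + 1)
    (k : ℕ) (X : Fin k → Fin n) (Y : Fin k → Fin m)
    (hX : Function.Injective X) (hY : Function.Injective Y) :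
    ((genPolyMatrix E inp out (F := F)).submatrix X Y).det ≠ 0 ∧
    ((genPolyMatrix E inp out (F := F)).submatrix X Y).det.totalDegree ≤ d * k ∧
    ((Finset.univ.filter (fun r : V × V → F =>
        MvPolynomial.eval r ((genPolyMatrix E inp out (F := F)).submatrix X Y).det = 0)).card : ℝ) /
      (Fintype.card (V × V → F)) ≤ (d * k : ℝ) / (Fintype.card F) := by
  classical
  -- finiteness of path sets
  have hfin : ∀ (i : Fin n) (j : Fin m),
      {p : List V | IsPathFromTo E p (inp i) (out j)}.Finite := fun i j =>
    Set.Finite.subset (List.finite_length_le V (d + 1)) (fun p hp => hdepth p _ _ hp)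
  have entry_eq : ∀ (i : Fin n) (j : Fin m), genPolyMatrix E inp out (F := F) i j
      = ∑ p ∈ (hfin i j).toFinset, ((p.zip p.tail).map MvPolynomial.X).prod := fun i j =>
    finsum_mem_eq_finite_toFinset_sum _ (hfin i j)
  -- degree bound for entries
  have deg_entry : ∀ (i : Fin n) (j : Fin m),
      (genPolyMatrix E inp out (F := F) i j).totalDegree ≤ d := by
    intro i j
    rw [entry_eq]
    refine le_trans (MvPolynomial.totalDegree_finset_sum _ _) (Finset.sup_le ?_)
    intro p hp
    rw [Set.Finite.mem_toFinset] at hp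
    have hlen : p.length ≤ d + 1 := hdepth p _ _ hp
    refine le_trans (MvPolynomial.totalDegree_list_prod _) ?_
    have hmap : ∀ l : List (V × V),
        ((l.map (MvPolynomial.X (R := F))).map MvPolynomial.totalDegree).sum = l.length := by
      intro l; induction l with
      | nil => simp
      | cons a l ih =>
        simp only [List.map_cons, List.sum_cons, MvPolynomial.totalDegree_X, List.length_cons,
          ← List.map_map] at ih ⊢
        omega
    rw [hmap]
    have hz : (p.zip p.tail).length = min p.length p.tail.length := List.length_zip
    rw [hz]
    simp only [List.length_tail]
    omega
  set D := ((genPolyMatrix E inp out (F := F)).submatrix X Y).det with hD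
  -- degree bound for determinant
  have deg_det : D.totalDegree ≤ d * k := by
    rw [hD, Matrix.det_apply']
    refine le_trans (MvPolynomial.totalDegree_finset_sum _ _) (Finset.sup_le ?_)
    intro σ _
    refine le_trans (MvPolynomial.totalDegree_mul _ _) ?_
    have h1 : (((Equiv.Perm.sign σ : ℤ) : MvPolynomial (V × V) F)).totalDegree = 0 := by
      rw [show ((Equiv.Perm.sign σ : ℤ) : MvPolynomial (V × V) F)
          = MvPolynomial.C ((Equiv.Perm.sign σ : ℤ) : F) from
        (map_intCast (MvPolynomial.C : F →+* MvPolynomial (V × V) F) _).symm]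
      exact MvPolynomial.totalDegree_C _
    rw [h1, zero_add]
    refine le_trans (MvPolynomial.totalDegree_finset_prod _ _) ?_
    calc ∑ i : Fin k, (((genPolyMatrix E inp out (F := F)).submatrix X Y) (σ i) i).totalDegree
        ≤ ∑ _i : Fin k, d := Finset.sum_le_sum fun i _ => deg_entry _ _
      _ = d * k := by simp [mul_comm]
  -- nonvanishing
  have hne : D ≠ 0 := by
    set X' : Finset (Fin n) := Finset.univ.image X with hX'
    set Y' : Finset (Fin m) := Finset.univ.image Y with hY'
    have hcard' : X'.card = Y'.card := by
      rw [hX', hY', Finset.card_image_of_injective _ hX, Finset.card_image_of_injective _ hY]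
    obtain ⟨P, hP1, hP2⟩ := hsc X' Y' hcard'
    set S := X'.map inp with hS
    set T := Y'.map out with hT
    have key : ∀ s ∈ S, ∃ t, t ∈ T ∧ ∃ q : List V, q.Chain' E ∧ q.head? = some s ∧
        q.getLast? = some t ∧ q.Nodup ∧ ∀ v ∈ q, v ∈ P s := by
      intro s hs
      obtain ⟨t, htT, hpath⟩ := hP1 s hs
      obtain ⟨q, h1, h2, h3, h4, h5⟩ := exists_nodup_chain E (P s).length (P s) le_rfl
        hpath.1 s t hpath.2.1 hpath.2.2
      exact ⟨t, htT, q, h1, h2, h3, h4, h5⟩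
    choose! t ht q hq1 hq2 hq3 hq4 hq5 using key
    have hdisj : ∀ s ∈ S, ∀ s' ∈ S, s ≠ s' → ∀ v, v ∈ q s → v ∉ q s' :=
      fun s hs s' hs' hss v hv hv' => hP2 s hs s' hs' hss v (hq5 s hs v hv) (hq5 s' hs' v hv')
    have hmemS : ∀ i : Fin k, inp (X i) ∈ S := fun i =>
      Finset.mem_map_of_mem _ (Finset.mem_image_of_mem X (Finset.mem_univ i))
    have hhead : ∀ s ∈ S, s ∈ q s := by
      intro s hs
      have h := hq2 s hs
      cases hq : q s with
      | nil => rw [hq] at h; simp at h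
      | cons c M =>
        rw [hq] at h
        obtain rfl : c = s := by simpa using h
        exact List.mem_cons_self
    have hlast : ∀ s ∈ S, t s ∈ q s := by
      intro s hs
      have h : t s ∈ (q s).getLast? := by rw [hq3 s hs]; rfl
      obtain ⟨hne0, heq⟩ := List.mem_getLast?_eq_getLast h
      exact heq ▸ List.getLast_mem hne0
    have hg : ∀ i : Fin k, ∃ j : Fin k, out (Y j) = t (inp (X i)) := by
      intro i
      have htT : t (inp (X i)) ∈ T := ht _ (hmemS i)
      rw [hT, Finset.mem_map] at htT
      obtain ⟨yy, hy, hyeq⟩ := htT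
      rw [hY', Finset.mem_image] at hy
      obtain ⟨j, -, rfl⟩ := hy
      exact ⟨j, hyeq⟩
    choose g hgspec using hg
    have hginj : Function.Injective g := by
      intro i i' hgii
      by_contra hii
      have h1 : inp (X i) ≠ inp (X i') := fun hh => hii (hX (inp.injective hh))
      refine hdisj _ (hmemS i) _ (hmemS i') h1 (t (inp (X i))) (hlast _ (hmemS i)) ?_
      rw [← hgspec i, hgii, hgspec i']
      exact hlast _ (hmemS i')
    have hgbij : Function.Bijective g := Finite.injective_iff_bijective.1 hginj
    set σ : Equiv.Perm (Fin k) := Equiv.ofBijective g hgbij with hσ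
    set Ed : V × V → Prop := fun e => ∃ s ∈ S, e ∈ (q s).zip (q s).tail with hEd
    set r₀ : V × V → F := fun e => if Ed e then 1 else 0 with hr₀
    have hiff : ∀ i j : Fin k, (out (Y j) ∈ q (inp (X i))) ↔ g i = j := by
      intro i j
      constructor
      · intro hmem
        obtain ⟨i'', rfl⟩ := hgbij.2 j
        by_contra hne2
        have hxx : inp (X i) ≠ inp (X i'') := by
          intro hh
          exact hne2 (by rw [hX (inp.injective hh)])
        refine hdisj _ (hmemS i) _ (hmemS i'') hxx _ hmem ?_
        rw [hgspec i'']
        exact hlast _ (hmemS i'')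
      · rintro rfl
        rw [hgspec i]
        exact hlast _ (hmemS i)
    have heval : ∀ i j : Fin k,
        MvPolynomial.eval r₀ (genPolyMatrix E inp out (F := F) (X i) (Y j))
          = if g i = j then 1 else 0 := by
      intro i j
      rw [entry_eq, map_sum]
      have hs : inp (X i) ∈ S := hmemS i
      set L := q (inp (X i)) with hL
      have hndL : L.Nodup := hq4 _ hs
      have hchL : L.Chain' E := hq1 _ hs
      have hheadL : L.head? = some (inp (X i)) := hq2 _ hs
      have haux : ∀ l : List (V × V),
          MvPolynomial.eval r₀ ((l.map (MvPolynomial.X (R := F))).prod)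
            = if ∀ e ∈ l, Ed e then (1 : F) else 0 := by
        intro l
        induction l with
        | nil => simp
        | cons a l ih =>
          rw [List.map_cons, List.prod_cons, map_mul, MvPolynomial.eval_X, ih]
          by_cases ha : Ed a <;> by_cases hl2 : ∀ e ∈ l, Ed e <;>
            simp [hr₀, ha, hl2, List.forall_mem_cons]
      rw [Finset.sum_congr rfl (fun p _ => haux (p.zip p.tail)), Finset.sum_boole]
      have hstep : ∀ u w, u ∈ L → Ed (u, w) → (u, w) ∈ L.zip L.tail := by
        intro u w hu hEduw
        obtain ⟨s', hs', hz⟩ := hEduw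
        have hu' : u ∈ q s' := (List.of_mem_zip hz).1
        have hsx : s' = inp (X i) := by
          by_contra hss
          exact hdisj _ hs' _ hs hss u hu' hu
        rw [hsx] at hz
        exact hz
      obtain ⟨M, hM⟩ : ∃ M, L = inp (X i) :: M := by
        cases hLc : L with
        | nil => rw [hLc] at hheadL; simp at hheadL
        | cons c M =>
          rw [hLc] at hheadL
          obtain rfl : c = inp (X i) := by simpa using hheadL
          exact ⟨M, rfl⟩
      have hxL : inp (X i) ∈ L := hhead _ hs
      have hforce : ∀ p : List V, IsPathFromTo E p (inp (X i)) (out (Y j)) →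
          (∀ e ∈ p.zip p.tail, Ed e) → p <+: L ∧ p ≠ [] ∧ p.getLast? = some (out (Y j)) := by
        intro p hpath hEdp
        obtain ⟨hch, hh, hlp⟩ := hpath
        have hedges : ∀ e ∈ p.zip p.tail, e ∈ L.zip L.tail :=
          chain_edges_sub hstep p _ hh hxL hEdp
        have hpre : p <+: L := by
          rw [hM]
          exact chain_forced hndL p _ M (by rw [← hM]) hh hedges
        exact ⟨hpre, fun h0 => by rw [h0] at hh; simp at hh, hlp⟩
      by_cases hy : out (Y j) ∈ L
      · obtain ⟨p0, hp0pre, hp0h, hp0l⟩ := exists_prefix_getLast hy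
        have hp0path : IsPathFromTo E p0 (inp (X i)) (out (Y j)) :=
          ⟨hchL.prefix hp0pre, by rw [hp0h, hheadL], hp0l⟩
        have hp0Ed : ∀ e ∈ p0.zip p0.tail, Ed e := fun e he =>
          ⟨inp (X i), hs, (zip_tail_prefix hp0pre).sublist.subset he⟩
        have hsingle : ((hfin (X i) (Y j)).toFinset.filter
            fun p => ∀ e ∈ p.zip p.tail, Ed e) = {p0} := by
          apply Finset.eq_singleton_iff_unique_mem.2
          constructor
          · exact Finset.mem_filter.2 ⟨(Set.Finite.mem_toFinset _).2 hp0path, hp0Ed⟩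
          · intro p hp
            rw [Finset.mem_filter, Set.Finite.mem_toFinset] at hp
            obtain ⟨hpath, hEdp⟩ := hp
            obtain ⟨hpre, hne0, hlp⟩ := hforce p hpath hEdp
            exact prefix_eq_of_getLast hndL hpre hp0pre hne0
              (fun h0 => by rw [h0] at hp0l; simp at hp0l) (by rw [hlp, hp0l])
        rw [hsingle]
        have hgij : g i = j := (hiff i j).1 hy
        simp [hgij]
      · have hempty : ((hfin (X i) (Y j)).toFinset.filter
            fun p => ∀ e ∈ p.zip p.tail, Ed e) = ∅ := by
          rw [Finset.filter_eq_empty_iff]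
          intro p hp hEdp
          rw [Set.Finite.mem_toFinset] at hp
          obtain ⟨hpre, hne0, hlp⟩ := hforce p hp hEdp
          apply hy
          have hyp : out (Y j) ∈ p := by
            obtain ⟨hne1, heq⟩ := List.mem_getLast?_eq_getLast (x := out (Y j)) (by rw [hlp]; rfl)
            exact heq ▸ List.getLast_mem hne1
          exact hpre.sublist.subset hyp
        rw [hempty]
        have hgij : ¬ (g i = j) := fun h => hy ((hiff i j).2 h)
        simp [hgij]
    have hmat : ((genPolyMatrix E inp out (F := F)).submatrix X Y).map (MvPolynomial.eval r₀)
        = σ.permMatrix F := by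
      ext i j
      rw [Matrix.map_apply, Matrix.submatrix_apply, heval i j]
      by_cases h : g i = j
      · simp [Equiv.Perm.permMatrix, PEquiv.toMatrix_apply, Equiv.toPEquiv_apply, hσ, h]
      · simp [Equiv.Perm.permMatrix, PEquiv.toMatrix_apply, Equiv.toPEquiv_apply, hσ, h]
    intro hD0
    have hzero : MvPolynomial.eval r₀ D = 0 := by rw [hD0]; simp
    rw [hD, RingHom.map_det, RingHom.mapMatrix_apply, hmat, Matrix.det_permutation] at hzero
    rcases Int.units_eq_one_or (Equiv.Perm.sign σ) with h | h <;> rw [h] at hzero <;>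
      simp at hzero
  refine ⟨hne, deg_det, ?_⟩
  -- probability bound
  have hsz := sz_general D hne
  have hFpos : 0 < (Fintype.card F : ℝ) := by exact_mod_cast Fintype.card_pos
  have hcard : (Fintype.card (V × V → F) : ℝ) = (Fintype.card F : ℝ) ^ Fintype.card (V × V) := by
    rw [Fintype.card_fun]; push_cast; ring
  rw [hcard, div_le_div_iff₀ (by positivity) hFpos]
  have hsz' : ((Finset.univ.filter fun r : V × V → F => MvPolynomial.eval r D = 0).card)
        * Fintype.card F ≤ D.totalDegree * Fintype.card F ^ Fintype.card (V × V) := by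
    convert hsz using 3
    congr!
  have h2 : ((Finset.univ.filter fun r : V × V → F => MvPolynomial.eval r D = 0).card : ℝ)
        * Fintype.card F ≤ (D.totalDegree : ℝ) * (Fintype.card F : ℝ) ^ Fintype.card (V × V) := by
    exact_mod_cast hsz'
  refine le_trans h2 ?_
  have h3 : (D.totalDegree : ℝ) ≤ (d * k : ℝ) := by exact_mod_cast deg_det
  have : (0:ℝ) ≤ (Fintype.card F : ℝ) ^ Fintype.card (V × V) := by positivity
  nlinarith
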